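/- Let r be an odd positive integer and let x, y ∈ ℤ with gcd(gcd(x, y), r) = 1. Then there exist f, g ∈ ℤ such that the Lipschitz quaternion X = f + g·k is a greatest common left divisor of A = r + x·i + y·j and r in Quaternion ℤ: X left-divides A and X left-divides (r : Quaternion ℤ), and every W ∈ Quaternion ℤ which left-divides both A and (r : Quaternion ℤ) also left-divides X. (X left-divides B means ∃ U ∈ Quaternion ℤ, B = X * U.) -/

import Mathlib

/-- Embedding in `ℤ²` is a special case of embedding in `ℤ³`: the quaternion left
GCD of `r + x·i + y·j` and `r` may be taken of the form `f + g·k`. -/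
theorem planar_quaternion_gcd (r : ℤ) (hr : 0 < r) (hodd : Odd r) (x y : ℤ)
    (hprim : Int.gcd (Int.gcd x y) r = 1) :
    ∃ f g : ℤ, ∃ X A : Quaternion ℤ,
      X = (⟨f, 0, 0, g⟩ : Quaternion ℤ) ∧ A = (⟨r, x, y, 0⟩ : Quaternion ℤ) ∧
      (∃ U : Quaternion ℤ, A = X * U) ∧
      (∃ U : Quaternion ℤ, ((r : ℤ) : Quaternion ℤ) = X * U) ∧
      (∀ W : Quaternion ℤ,
        (∃ U : Quaternion ℤ, A = W * U) →
        (∃ U : Quaternion ℤ, ((r : ℤ) : Quaternion ℤ) = W * U) →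
        ∃ U : Quaternion ℤ, X = W * U) := by
  -- z = x - y·k  viewed as the Gaussian integer ⟨x, -y⟩
  set z : GaussianInt := ⟨x, -y⟩ with hz
  set d : GaussianInt := EuclideanDomain.gcd z (r : GaussianInt) with hd
  obtain ⟨u, hu⟩ := EuclideanDomain.gcd_dvd_left z (r : GaussianInt)
  obtain ⟨v, hv⟩ := EuclideanDomain.gcd_dvd_right z (r : GaussianInt)
  have hbez := EuclideanDomain.gcd_eq_gcd_ab z (r : GaussianInt)
  set a : GaussianInt := EuclideanDomain.gcdA z (r : GaussianInt) with ha
  set b : GaussianInt := EuclideanDomain.gcdB z (r : GaussianInt) with hb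
  -- component equations
  have h1 : x = d.re * u.re - d.im * u.im := by
    have := congrArg Zsqrtd.re hu; simp [Zsqrtd.re_mul, hz] at this; linarith
  have h2 : -y = d.re * u.im + d.im * u.re := by
    have := congrArg Zsqrtd.im hu; simp [Zsqrtd.im_mul, hz] at this; linarith
  have h3 : r = d.re * v.re - d.im * v.im := by
    have := congrArg Zsqrtd.re hv; simp [Zsqrtd.re_mul] at this; linarith
  have h4 : 0 = d.re * v.im + d.im * v.re := by
    have := congrArg Zsqrtd.im hv; simp [Zsqrtd.im_mul] at this; linarith
  have h5 : d.re = x * a.re + y * a.im + r * b.re := by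
    have := congrArg Zsqrtd.re hbez; simp [Zsqrtd.re_mul, hz, ← hd] at this; linarith
  have h6 : d.im = x * a.im - y * a.re + r * b.im := by
    have := congrArg Zsqrtd.im hbez; simp [Zsqrtd.im_mul, hz, ← hd] at this; linarith
  obtain ⟨X, hX0⟩ : ∃ q : Quaternion ℤ, q = ⟨d.re, 0, 0, -d.im⟩ := ⟨_, rfl⟩
  obtain ⟨A, hA0⟩ : ∃ q : Quaternion ℤ, q = ⟨r, x, y, 0⟩ := ⟨_, rfl⟩
  obtain ⟨P, hP0⟩ : ∃ q : Quaternion ℤ, q = ⟨v.re, u.re, -u.im, -v.im⟩ := ⟨_, rfl⟩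
  obtain ⟨Q, hQ0⟩ : ∃ q : Quaternion ℤ, q = ⟨v.re, 0, 0, -v.im⟩ := ⟨_, rfl⟩
  obtain ⟨α, hα0⟩ : ∃ q : Quaternion ℤ, q = ⟨0, -a.re, -a.im, 0⟩ := ⟨_, rfl⟩
  obtain ⟨β, hβ0⟩ : ∃ q : Quaternion ℤ, q = ⟨b.re, a.re, a.im, -b.im⟩ := ⟨_, rfl⟩
  refine ⟨d.re, -d.im, X, A, hX0, hA0, ⟨P, ?_⟩, ⟨Q, ?_⟩, ?_⟩
  · ext <;> simp only [Quaternion.re_mul, Quaternion.imI_mul, Quaternion.imJ_mul,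
      Quaternion.imK_mul] <;> simp [hX0, hA0, hP0] <;> linarith
  · ext <;> simp only [Quaternion.re_mul, Quaternion.imI_mul, Quaternion.imJ_mul,
      Quaternion.imK_mul] <;> simp [hX0, hQ0] <;> linarith
  · have hbezq : X = A * α + ((r : ℤ) : Quaternion ℤ) * β := by
      ext <;> simp only [Quaternion.re_add, Quaternion.imI_add, Quaternion.imJ_add, Quaternion.imK_add, Quaternion.re_mul, Quaternion.imI_mul, Quaternion.imJ_mul,
        Quaternion.imK_mul] <;> simp [hX0, hA0, hα0, hβ0] <;> linarith
    rintro W ⟨U, hU⟩ ⟨V, hV⟩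
    exact ⟨U * α + V * β, by rw [hbezq, hU, hV]; noncomm_ring⟩
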